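/- Let A be an associative unital ℂ-algebra, q ∈ ℂ nonzero and not a root of unity (so that [n]_q := (qⁿ-q^{-n})/(q-q^{-1}) ≠ 0 for all n ≥ 1), and let x ∈ A be nilpotent. Define the q-exponential E_q(x) := Σ_{n≥0} q^{n(n-1)/2}·xⁿ/[n]_q! (a finite sum since x is nilpotent), where [n]_q! = [n]_q[n-1]_q⋯[1]_q and [0]_q! = 1. Then E_q(x)·E_{q^{-1}}(-x) = 1. -/

import Mathlib

/-- The `q`-number `[n]_q = (qⁿ - q⁻ⁿ)/(q - q⁻¹)` for `n : ℕ`. -/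
noncomputable def qnum (q : ℂ) (n : ℕ) : ℂ := (q ^ n - (q⁻¹) ^ n) / (q - q⁻¹)

/-- The `q`-factorial `[n]_q! = [n]_q [n-1]_q ⋯ [1]_q`, with `[0]_q! = 1`. -/
noncomputable def qfact (q : ℂ) : ℕ → ℂ
  | 0 => 1
  | n + 1 => qnum q (n + 1) * qfact q n

/-- The truncated `q`-exponential `E_q(x) = Σ_{n<N} q^{n(n-1)/2} xⁿ/[n]_q!`. -/
noncomputable def qexp {A : Type*} [Ring A] [Algebra ℂ A]
    (q : ℂ) (x : A) (N : ℕ) : A :=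
  ∑ n ∈ Finset.range N, (q ^ (n * (n - 1) / 2) / qfact q n) • x ^ n

section QexpAux
open Finset


lemma qnum_inv (q : ℂ) (n : ℕ) : qnum q⁻¹ n = qnum q n := by
  unfold qnum
  rw [inv_inv, ← neg_div_neg_eq, neg_sub, neg_sub]

lemma qnum_zero (q : ℂ) : qnum q 0 = 0 := by simp [qnum]

lemma qfact_inv (q : ℂ) (n : ℕ) : qfact q⁻¹ n = qfact q n := by
  induction n with
  | zero => rfl
  | succ n ih => rw [qfact, qfact, qnum_inv, ih]

lemma qfact_ne_zero (q : ℂ) (hq : ∀ n : ℕ, 1 ≤ n → qnum q n ≠ 0) (n : ℕ) :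
    qfact q n ≠ 0 := by
  induction n with
  | zero => simp [qfact]
  | succ n ih => exact mul_ne_zero (hq (n+1) (Nat.le_add_left 1 n)) ih

lemma qnum_split (q : ℂ) (n k : ℕ) :
    qnum q (n + k) = q ^ k * qnum q n + (q⁻¹) ^ n * qnum q k := by
  unfold qnum
  rw [← mul_div_assoc, ← mul_div_assoc, ← add_div, pow_add, pow_add]
  congr 1
  ring

noncomputable def qS (q : ℂ) (m : ℕ) : ℂ :=
  ∑ p ∈ Finset.HasAntidiagonal.antidiagonal m,
    (-1) ^ p.2 * q ^ (p.1 * (p.1 - 1) / 2) * (q⁻¹) ^ (p.2 * (p.2 - 1) / 2) /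
      (qfact q p.1 * qfact q p.2)

lemma qS_zero (q : ℂ) : qS q 0 = 1 := by
  simp [qS, qfact]

lemma cancel_div (c D X : ℂ) (hc : c ≠ 0) : c * (X / (c * D)) = X / D := by
  rw [← mul_div_assoc, mul_div_mul_left _ _ hc]

lemma termA (q c f1 f2 s P R : ℂ) (hc : c ≠ 0) (n k : ℕ) :
    q ^ k * c * (s * (P * q ^ n) * R / (c * f1 * f2)) =
      q ^ n * q ^ k * (s * P * R / (f1 * f2)) := by
  rw [mul_assoc c f1 f2, mul_assoc (q ^ k) c _, cancel_div _ _ _ hc]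
  ring

lemma termB (qi c f1 f2 s P R : ℂ) (hc : c ≠ 0) (n k : ℕ) :
    qi ^ n * c * (s * -1 * P * (R * qi ^ k) / (f1 * (c * f2))) =
      -(qi ^ n * qi ^ k * (s * P * R / (f1 * f2))) := by
  rw [show f1 * (c * f2) = c * (f1 * f2) by ring, mul_assoc (qi ^ n) c _,
    cancel_div _ _ _ hc]
  ring

lemma qS_succ (q : ℂ) (hq0 : q ≠ 0) (hq : ∀ n : ℕ, 1 ≤ n → qnum q n ≠ 0) (m : ℕ) :
    qnum q (m + 1) * qS q (m + 1) = (q ^ m - (q⁻¹) ^ m) * qS q m := by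
  have hqf := qfact_ne_zero q hq
  have key : ∀ p ∈ Finset.HasAntidiagonal.antidiagonal (m + 1),
      qnum q (m + 1) * ((-1) ^ p.2 * q ^ (p.1 * (p.1 - 1) / 2) *
          (q⁻¹) ^ (p.2 * (p.2 - 1) / 2) / (qfact q p.1 * qfact q p.2)) =
      (q ^ p.2 * qnum q p.1) * ((-1) ^ p.2 * q ^ (p.1 * (p.1 - 1) / 2) *
          (q⁻¹) ^ (p.2 * (p.2 - 1) / 2) / (qfact q p.1 * qfact q p.2)) +
      ((q⁻¹) ^ p.1 * qnum q p.2) * ((-1) ^ p.2 * q ^ (p.1 * (p.1 - 1) / 2) *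
          (q⁻¹) ^ (p.2 * (p.2 - 1) / 2) / (qfact q p.1 * qfact q p.2)) := by
    intro p hp
    rw [← add_mul, ← qnum_split, Finset.HasAntidiagonal.mem_antidiagonal.mp hp]
  rw [qS, Finset.mul_sum, Finset.sum_congr rfl key, Finset.sum_add_distrib]
  have hA : (∑ p ∈ Finset.HasAntidiagonal.antidiagonal (m + 1),
      (q ^ p.2 * qnum q p.1) * ((-1) ^ p.2 * q ^ (p.1 * (p.1 - 1) / 2) *
        (q⁻¹) ^ (p.2 * (p.2 - 1) / 2) / (qfact q p.1 * qfact q p.2))) = q ^ m * qS q m := by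
    rw [Finset.Nat.sum_antidiagonal_succ]
    simp only [qnum_zero, mul_zero, zero_mul, zero_add]
    rw [qS, Finset.mul_sum]
    refine Finset.sum_congr rfl fun p hp => ?_
    have hpm : p.1 + p.2 = m := Finset.HasAntidiagonal.mem_antidiagonal.mp hp
    have htri : (p.1 + 1) * (p.1 + 1 - 1) / 2 = p.1 * (p.1 - 1) / 2 + p.1 :=
      Nat.triangle_succ p.1
    rw [htri]
    show q ^ p.2 * qnum q (p.1 + 1) * ((-1) ^ p.2 * q ^ (p.1 * (p.1 - 1) / 2 + p.1) *
        (q⁻¹) ^ (p.2 * (p.2 - 1) / 2) / (qfact q (p.1 + 1) * qfact q p.2)) = _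
    rw [qfact, pow_add, ← hpm, pow_add]
    exact termA q (qnum q (p.1 + 1)) (qfact q p.1) (qfact q p.2) ((-1) ^ p.2)
      (q ^ (p.1 * (p.1 - 1) / 2)) ((q⁻¹) ^ (p.2 * (p.2 - 1) / 2))
      (hq (p.1 + 1) (Nat.le_add_left 1 p.1)) p.1 p.2
  have hB : (∑ p ∈ Finset.HasAntidiagonal.antidiagonal (m + 1),
      ((q⁻¹) ^ p.1 * qnum q p.2) * ((-1) ^ p.2 * q ^ (p.1 * (p.1 - 1) / 2) *
        (q⁻¹) ^ (p.2 * (p.2 - 1) / 2) / (qfact q p.1 * qfact q p.2))) = -((q⁻¹) ^ m * qS q m) := by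
    rw [Finset.Nat.sum_antidiagonal_succ']
    simp only [qnum_zero, mul_zero, zero_mul, zero_add]
    rw [qS, Finset.mul_sum, ← Finset.sum_neg_distrib]
    refine Finset.sum_congr rfl fun p hp => ?_
    have hpm : p.1 + p.2 = m := Finset.HasAntidiagonal.mem_antidiagonal.mp hp
    have htri : (p.2 + 1) * (p.2 + 1 - 1) / 2 = p.2 * (p.2 - 1) / 2 + p.2 :=
      Nat.triangle_succ p.2
    rw [htri]
    show (q⁻¹) ^ p.1 * qnum q (p.2 + 1) * ((-1) ^ (p.2 + 1) * q ^ (p.1 * (p.1 - 1) / 2) *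
        (q⁻¹) ^ (p.2 * (p.2 - 1) / 2 + p.2) / (qfact q p.1 * qfact q (p.2 + 1))) = _
    rw [qfact, ← hpm]
    simp only [pow_add, pow_succ, pow_zero, one_mul]
    exact termB q⁻¹ (qnum q (p.2 + 1)) (qfact q p.1) (qfact q p.2) ((-1) ^ p.2)
      (q ^ (p.1 * (p.1 - 1) / 2)) ((q⁻¹) ^ (p.2 * (p.2 - 1) / 2))
      (hq (p.2 + 1) (Nat.le_add_left 1 p.2)) p.1 p.2
  rw [hA, hB]
  ring

lemma qS_one (q : ℂ) (hd : q - q⁻¹ ≠ 0) : qS q 1 = 0 := by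
  have h1 : qnum q 1 = 1 := by
    rw [qnum, pow_one, pow_one, div_self hd]
  rw [qS]
  rw [Finset.Nat.sum_antidiagonal_succ]
  simp [qfact, h1]

lemma qS_eq_zero (q : ℂ) (hd : q - q⁻¹ ≠ 0) (hq0 : q ≠ 0)
    (hq : ∀ n : ℕ, 1 ≤ n → qnum q n ≠ 0) (m : ℕ) (hm : 1 ≤ m) : qS q m = 0 := by
  induction m with
  | zero => omega
  | succ n ih =>
    rcases Nat.eq_zero_or_pos n with hn | hn
    · subst hn; exact qS_one q hd
    · have h := qS_succ q hq0 hq n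
      rw [ih hn, mul_zero] at h
      exact (mul_eq_zero.mp h).resolve_left (hq (n+1) (Nat.le_add_left 1 n))


lemma smul_neg_pow {A : Type*} [Ring A] [Algebra ℂ A] (c : ℂ) (x : A) (k : ℕ) :
    c • (-x) ^ k = ((-1 : ℂ) ^ k * c) • x ^ k := by
  rw [← neg_one_smul ℂ x, smul_pow, smul_smul, mul_comm]


end QexpAux

/-- For nilpotent `x` (so that the `q`-exponential series is a finite sum),
`E_q(x) · E_{q⁻¹}(-x) = 1`, provided all the `q`-numbers `[n]_q`, `n ≥ 1`, are nonzero. -/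
theorem qexp_mul_qexp_inv {A : Type*} [Ring A] [Algebra ℂ A]
    (q : ℂ) (hq0 : q ≠ 0) (hq : ∀ n : ℕ, 1 ≤ n → qnum q n ≠ 0)
    (x : A) (N : ℕ) (hx : x ^ N = 0) :
    qexp q x N * qexp q⁻¹ (-x) N = 1 := by
  have hd : q - q⁻¹ ≠ 0 := by
    intro h
    exact hq 1 le_rfl (by simp [qnum, pow_one, h])
  rcases Nat.eq_zero_or_pos N with hN | hN
  · subst hN
    rw [pow_zero] at hx
    simp only [qexp, Finset.range_zero, Finset.sum_empty, mul_zero]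
    exact hx.symm
  have h2 : qexp q⁻¹ (-x) N
      = ∑ k ∈ Finset.range N,
          ((-1 : ℂ) ^ k * ((q⁻¹) ^ (k * (k - 1) / 2) / qfact q k)) • x ^ k := by
    unfold qexp
    exact Finset.sum_congr rfl fun k _ => by rw [qfact_inv, smul_neg_pow]
  set F : ℕ → ℕ → A := fun n k =>
    ((q ^ (n * (n - 1) / 2) / qfact q n) *
      ((-1 : ℂ) ^ k * ((q⁻¹) ^ (k * (k - 1) / 2) / qfact q k))) • x ^ (n + k) with hF
  have hprod : qexp q x N * qexp q⁻¹ (-x) N =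
      ∑ n ∈ Finset.range N, ∑ k ∈ Finset.range N, F n k := by
    rw [h2, qexp, Finset.sum_mul_sum]
    exact Finset.sum_congr rfl fun n _ => Finset.sum_congr rfl fun k _ => by
      simp only [hF, smul_mul_smul_comm, pow_add]
  have hvan : ∀ n k : ℕ, N ≤ n + k → F n k = 0 := by
    intro n k h
    have : x ^ (n + k) = 0 := by
      rw [← Nat.add_sub_cancel' h, pow_add, hx, zero_mul]
    rw [hF]; dsimp only; rw [this, smul_zero]
  have htr : ∀ n ∈ Finset.range N,
      ∑ k ∈ Finset.range N, F n k = ∑ k ∈ Finset.range (N - n), F n k := by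
    intro n hn
    refine (Finset.sum_subset (Finset.range_subset_range.2 (Nat.sub_le N n)) ?_).symm
    intro k hk hk'
    rw [Finset.mem_range] at hk hk'
    exact hvan n k (by omega)
  rw [hprod, Finset.sum_congr rfl htr, ← Finset.sum_range_diag_flip N (fun n k => F n k)]
  have hdiag : ∀ m ∈ Finset.range N,
      ∑ k ∈ Finset.range (m + 1), F k (m - k) = qS q m • x ^ m := by
    intro m _
    have hterm : ∀ k ∈ Finset.range (m + 1), F k (m - k) =
        ((q ^ (k * (k - 1) / 2) / qfact q k) *
          ((-1 : ℂ) ^ (m - k) * ((q⁻¹) ^ ((m - k) * (m - k - 1) / 2) / qfact q (m - k)))) • x ^ m := by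
      intro k hk
      rw [Finset.mem_range, Nat.lt_succ_iff] at hk
      rw [hF]; dsimp only; rw [Nat.add_sub_cancel' hk]
    rw [Finset.sum_congr rfl hterm, ← Finset.sum_smul]
    congr 1
    rw [qS, Finset.Nat.sum_antidiagonal_eq_sum_range_succ_mk]
    exact Finset.sum_congr rfl fun k _ => by ring
  rw [Finset.sum_congr rfl hdiag,
    Finset.sum_eq_single_of_mem 0 (Finset.mem_range.mpr hN)
      (fun b _ hb => by
        rw [qS_eq_zero q hd hq0 hq b (Nat.one_le_iff_ne_zero.mpr hb), zero_smul]),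
    qS_zero, pow_zero, one_smul]
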